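/- Assume P is irreducible. Fix k ∈ D, ℓ ∈ [n] with ℓ ≠ k, and i ∈ [n]. For ε ∈ ℝ set S^τ_ε = S^τ + ε(e_k e_ℓ^T − e_k e_k^T), let (S^τ_ε)_D be obtained from S^τ_ε by replacing every row and column with index in [n]∖D by zero, and for ε in a sufficiently small neighborhood of 0 let v_ε be the unique solution of (I − (S^τ_ε)_D) v = ∑_{t=0}^{τ−1} S^t R_D + (S^τ_ε − (S^τ_ε)_D) R_{D^c}, where R_{D^c}(i) = R(i)·1{i∉D}. Then v_0 = u, the map ε ↦ v_ε(i) is differentiable at ε = 0, and its derivative there equals (e_i^T (I − S_D^τ)^{-1} e_k)·(u(ℓ) − u(k)). -/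

import Mathlib

open MeasureTheory Finset Filter
open scoped ENNReal NNReal ENat

noncomputable section

namespace RareTD

variable {n : ℕ}

/-- `P` is a row-stochastic matrix. -/
def IsStochastic (P : Matrix (Fin n) (Fin n) ℝ) : Prop :=
  (∀ i j, 0 ≤ P i j) ∧ ∀ i, ∑ j, P i j = 1

/-- Irreducibility of a nonnegative matrix. -/
def IsIrreducible (P : Matrix (Fin n) (Fin n) ℝ) : Prop :=
  ∀ i j, ∃ m : ℕ, 0 < m ∧ 0 < (P ^ m) i j

/-- `Pr i` is the law of the Markov chain with transition matrix `P` started at `i`,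
characterized by its finite-dimensional distributions. -/
def IsMarkovFamily (P : Matrix (Fin n) (Fin n) ℝ)
    (Pr : Fin n → Measure (ℕ → Fin n)) : Prop :=
  (∀ i, IsProbabilityMeasure (Pr i)) ∧
    ∀ (i : Fin n) (m : ℕ) (x : ℕ → Fin n),
      (Pr i {ω | ∀ t ≤ m, ω t = x t}).toReal =
        (if x 0 = i then 1 else 0) * ∏ t ∈ Finset.range m, P (x t) (x (t + 1))

/-- The matrix `S` of the chain stopped on exiting `D`. -/
def stopMat (P : Matrix (Fin n) (Fin n) ℝ) (D : Finset (Fin n)) :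
    Matrix (Fin n) (Fin n) ℝ :=
  fun i j => if i ∈ D then P i j else if i = j then 1 else 0

/-- Exit time `T = min {t ≥ 0 : ω t ∉ D}`, with value `⊤` if the path never leaves `D`. -/
def exitT (D : Finset (Fin n)) (ω : ℕ → Fin n) : ℕ∞ :=
  ⨅ (t : ℕ) (_ : ω t ∉ D), (t : ℕ∞)

/-- Hitting time of a set at positive times, `min {t > 0 : ω t ∈ A}`. -/
def hitT (A : Set (Fin n)) (ω : ℕ → Fin n) : ℕ∞ :=
  ⨅ (t : ℕ) (_ : 0 < t ∧ ω t ∈ A), (t : ℕ∞)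

/-- The stopped path `t ↦ X_{t ∧ T}`. -/
def stopped (D : Finset (Fin n)) (ω : ℕ → Fin n) : ℕ → Fin n
  | 0 => ω 0
  | t + 1 => if stopped D ω t ∈ D then ω (t + 1) else stopped D ω t

/-- `R_D`, the reward restricted to `D`. -/
def RD (D : Finset (Fin n)) (R : Fin n → ℝ) : Fin n → ℝ := fun i => if i ∈ D then R i else 0

/-- The value function `u(i) = E_i[∑_{t=0}^{T} R(X_t)]`, in `[0,∞]`. -/
def valueE (Pr : Fin n → Measure (ℕ → Fin n)) (D : Finset (Fin n)) (R : Fin n → ℝ)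
    (i : Fin n) : ℝ≥0∞ :=
  ∑' t : ℕ, ∫⁻ ω, Set.indicator {ω' : ℕ → Fin n | (t : ℕ∞) ≤ exitT D ω'}
      (fun ω' => ENNReal.ofReal (R (ω' t))) ω ∂(Pr i)

/-- The real-valued value function. -/
def valueR (Pr : Fin n → Measure (ℕ → Fin n)) (D : Finset (Fin n)) (R : Fin n → ℝ)
    (i : Fin n) : ℝ := (valueE Pr D R i).toReal

/-- Replace by `0` every row and column with index outside `D`. -/
def zeroD (D : Finset (Fin n)) (M : Matrix (Fin n) (Fin n) ℝ) : Matrix (Fin n) (Fin n) ℝ :=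
  fun i j => if i ∈ D ∧ j ∈ D then M i j else 0

/-- The asymptotic variance `σ_i²` of the LSTD estimator. -/
def avar (P : Matrix (Fin n) (Fin n) ℝ) (Pr : Fin n → Measure (ℕ → Fin n))
    (D : Finset (Fin n)) (R : Fin n → ℝ) (μ : Fin n → ℝ) (τ : ℕ) (i : Fin n) : ℝ :=
  ∑ k ∈ D, (μ k)⁻¹ * ((((1 : Matrix (Fin n) (Fin n) ℝ) - zeroD D (stopMat P D ^ τ))⁻¹) i k) ^ 2 *
    ∫ ω, (∑ t ∈ Finset.range τ, RD D R (stopped D ω t)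
        + valueR Pr D R (stopped D ω τ) - valueR Pr D R k) ^ 2 ∂(Pr k)

/-- Mean exit time `E_i[T] = ∑_{t≥0} P_i[T > t]`, in `[0,∞]`. -/
def meanExit (Pr : Fin n → Measure (ℕ → Fin n)) (D : Finset (Fin n)) (i : Fin n) : ℝ≥0∞ :=
  ∑' t : ℕ, Pr i {ω | (t : ℕ∞) < exitT D ω}

/-- The event `T_ℓ^τ < min (T_k^τ, T_{Dᶜ∖{ℓ}}^τ)` for the `τ`-step chain. -/
def Qset (D : Finset (Fin n)) (k ℓ : Fin n) : Set (ℕ → Fin n) :=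
  {ω | hitT {ℓ} ω < min (hitT {k} ω) (hitT ((D : Set (Fin n))ᶜ \ {ℓ}) ω)}

/-- Green's function of the `τ`-step chain: `E_i[∑_{t=0}^{T^τ-1} 1{Y_t^τ = k}]`. -/
def greenY (PrY : Fin n → Measure (ℕ → Fin n)) (D : Finset (Fin n)) (i k : Fin n) : ℝ≥0∞ :=
  ∑' t : ℕ, PrY i {ω | (t : ℕ∞) < exitT D ω ∧ ω t = k}

/-- Green's function of the chain: `E_ℓ[∑_{t=0}^{T} 1{X_t = j}]` (the sum includes `t = T`). -/
def greenX (Pr : Fin n → Measure (ℕ → Fin n)) (D : Finset (Fin n)) (ℓ j : Fin n) : ℝ≥0∞ :=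
  ∑' t : ℕ, Pr ℓ {ω | (t : ℕ∞) ≤ exitT D ω ∧ ω t = j}


variable {n : ℕ}

/-! ### Matrix lemmas -/

lemma pow_entry_nonneg {A : Matrix (Fin n) (Fin n) ℝ} (hA : ∀ i j, 0 ≤ A i j) (m : ℕ) :
    ∀ i j, 0 ≤ (A ^ m) i j := by
  induction m with
  | zero => intro i j; simp [Matrix.one_apply]; positivity
  | succ m ih =>
    intro i j
    rw [pow_succ, Matrix.mul_apply]
    exact Finset.sum_nonneg fun q _ => mul_nonneg (ih i q) (hA q j)

lemma rowsum_mul (A B : Matrix (Fin n) (Fin n) ℝ) (i : Fin n) :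
    ∑ j, (A * B) i j = ∑ q, A i q * ∑ j, B q j := by
  simp only [Matrix.mul_apply]
  rw [Finset.sum_comm]
  simp [Finset.mul_sum]

lemma stoch_mul {A B : Matrix (Fin n) (Fin n) ℝ} (hA : IsStochastic A) (hB : IsStochastic B) :
    IsStochastic (A * B) := by
  refine ⟨fun i j => ?_, fun i => ?_⟩
  · rw [Matrix.mul_apply]
    exact Finset.sum_nonneg fun q _ => mul_nonneg (hA.1 i q) (hB.1 q j)
  · rw [rowsum_mul]
    simp only [hB.2]
    simpa using hA.2 i

lemma stoch_one : IsStochastic (1 : Matrix (Fin n) (Fin n) ℝ) := by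
  constructor
  · intro i j; simp [Matrix.one_apply]; positivity
  · intro i; simp [Matrix.one_apply]

lemma stoch_pow {A : Matrix (Fin n) (Fin n) ℝ} (hA : IsStochastic A) (m : ℕ) :
    IsStochastic (A ^ m) := by
  induction m with
  | zero => simpa using stoch_one
  | succ m ih => rw [pow_succ]; exact stoch_mul ih hA

lemma prod_path_le_pow {A : Matrix (Fin n) (Fin n) ℝ} (hA : ∀ i j, 0 ≤ A i j)
    (x : ℕ → Fin n) : ∀ m, ∏ t ∈ Finset.range m, A (x t) (x (t + 1)) ≤ (A ^ m) (x 0) (x m) := by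
  intro m
  induction m with
  | zero => simp [Matrix.one_apply]
  | succ m ih =>
    rw [Finset.prod_range_succ, pow_succ]
    have h1 : (A ^ m) (x 0) (x m) * A (x m) (x (m + 1)) ≤ (A ^ m * A) (x 0) (x (m + 1)) := by
      rw [Matrix.mul_apply]
      exact Finset.single_le_sum
        (f := fun q => (A ^ m) (x 0) q * A q (x (m + 1)))
        (fun q _ => mul_nonneg (pow_entry_nonneg hA m _ _) (hA _ _)) (Finset.mem_univ (x m))
    exact le_trans (mul_le_mul_of_nonneg_right ih (hA _ _)) h1

lemma exists_path {A : Matrix (Fin n) (Fin n) ℝ} (hA : ∀ i j, 0 ≤ A i j) :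
    ∀ (m : ℕ) (i d : Fin n), 0 < (A ^ m) i d →
      ∃ x : ℕ → Fin n, x 0 = i ∧ x m = d ∧ ∀ t < m, 0 < A (x t) (x (t + 1)) := by
  intro m
  induction m with
  | zero =>
    intro i d h
    refine ⟨fun _ => i, rfl, ?_, by omega⟩
    simp only [pow_zero, Matrix.one_apply] at h
    by_contra hne
    simp [hne] at h
  | succ m ih =>
    intro i d h
    rw [pow_succ, Matrix.mul_apply] at h
    have hex : ∃ q, 0 < (A ^ m) i q * A q d := by
      by_contra hq
      push_neg at hq
      have : ∑ q, (A ^ m) i q * A q d ≤ 0 := Finset.sum_nonpos fun q _ => hq q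
      linarith
    obtain ⟨q, hq⟩ := hex
    have h1 : 0 < (A ^ m) i q := by
      rcases mul_pos_iff.mp hq with ⟨h1, _⟩ | ⟨h1, _⟩
      · exact h1
      · exact absurd h1 (not_lt.mpr (pow_entry_nonneg hA m i q))
    have h2 : 0 < A q d := by
      rcases mul_pos_iff.mp hq with ⟨_, h2⟩ | ⟨h2, _⟩
      · exact h2
      · exact absurd h2 (not_lt.mpr (pow_entry_nonneg hA m i q))
    obtain ⟨x, hx0, hxm, hxp⟩ := ih i q h1
    refine ⟨fun t => if t ≤ m then x t else d, by simpa using hx0, by simp, ?_⟩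
    intro t ht
    rcases Nat.lt_or_ge t m with h | h
    · simpa [Nat.le_of_lt h, Nat.succ_le_of_lt h] using hxp t h
    · have : t = m := by omega
      subst this
      simpa [hxm] using h2

lemma stopMat_stoch {P : Matrix (Fin n) (Fin n) ℝ} (hP : IsStochastic P) (D : Finset (Fin n)) :
    IsStochastic (stopMat P D) := by
  constructor
  · intro i j
    unfold stopMat
    split
    · exact hP.1 i j
    · split <;> norm_num
  · intro i
    unfold stopMat
    by_cases h : i ∈ D <;> simp [h, hP.2 i]

lemma stopMat_pow_notD {P : Matrix (Fin n) (Fin n) ℝ} (D : Finset (Fin n))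
    {i : Fin n} (hi : i ∉ D) (m : ℕ) :
    ∀ j, (stopMat P D ^ m) i j = if i = j then 1 else 0 := by
  induction m with
  | zero => intro j; simp [Matrix.one_apply]
  | succ m ih =>
    intro j
    rw [pow_succ', Matrix.mul_apply]
    have : ∀ q, stopMat P D i q * (stopMat P D ^ m) q j
        = if q = i then (stopMat P D ^ m) i j else 0 := by
      intro q
      unfold stopMat
      by_cases hq : q = i
      · subst hq; simp [hi]
      · have : ¬ (i = q) := fun h => hq h.symm
        simp [hi, hq, this]
    simp only [this, Finset.sum_ite_eq' Finset.univ i, Finset.mem_univ, if_true]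
    exact ih j

/-- `α m i = ∑_{j ∈ D} (S^m) i j` -/

def alphaD (P : Matrix (Fin n) (Fin n) ℝ) (D : Finset (Fin n)) (m : ℕ) (i : Fin n) : ℝ :=
  ∑ j ∈ D, (stopMat P D ^ m) i j

lemma alphaD_nonneg {P : Matrix (Fin n) (Fin n) ℝ} (hP : IsStochastic P) (D : Finset (Fin n))
    (m : ℕ) (i : Fin n) : 0 ≤ alphaD P D m i :=
  Finset.sum_nonneg fun j _ => pow_entry_nonneg (stopMat_stoch hP D).1 m i j

lemma alphaD_le_one {P : Matrix (Fin n) (Fin n) ℝ} (hP : IsStochastic P) (D : Finset (Fin n))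
    (m : ℕ) (i : Fin n) : alphaD P D m i ≤ 1 := by
  have hS := stopMat_stoch hP D
  have := (stoch_pow hS m).2 i
  rw [alphaD, ← this]
  exact Finset.sum_le_sum_of_subset_of_nonneg (Finset.subset_univ D)
    (fun j _ _ => pow_entry_nonneg hS.1 m i j)

lemma alphaD_step {P : Matrix (Fin n) (Fin n) ℝ} (hP : IsStochastic P) (D : Finset (Fin n))
    (m : ℕ) (i : Fin n) : alphaD P D (m + 1) i ≤ alphaD P D m i := by
  have hS := stopMat_stoch hP D
  have hpos := pow_entry_nonneg hS.1 m
  unfold alphaD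
  rw [pow_succ]
  simp only [Matrix.mul_apply]
  rw [Finset.sum_comm]
  have key : ∀ q, ∑ j ∈ D, (stopMat P D ^ m) i q * stopMat P D q j
      ≤ if q ∈ D then (stopMat P D ^ m) i q else 0 := by
    intro q
    by_cases hq : q ∈ D
    · rw [if_pos hq, ← Finset.mul_sum]
      have h1 : ∑ j ∈ D, stopMat P D q j ≤ 1 := by
        rw [← hS.2 q]
        exact Finset.sum_le_sum_of_subset_of_nonneg (Finset.subset_univ D)
          (fun j _ _ => hS.1 q j)
      calc (stopMat P D ^ m) i q * ∑ j ∈ D, stopMat P D q j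
          ≤ (stopMat P D ^ m) i q * 1 := by
            exact mul_le_mul_of_nonneg_left h1 (hpos i q)
        _ = _ := mul_one _
    · rw [if_neg hq]
      have : ∀ j ∈ D, stopMat P D q j = 0 := by
        intro j hj
        unfold stopMat
        have : ¬ q = j := fun h => hq (h ▸ hj)
        simp [hq, this]
      rw [Finset.sum_congr rfl fun j hj => by rw [this j hj, mul_zero]]
      simp
  calc ∑ q, ∑ j ∈ D, (stopMat P D ^ m) i q * stopMat P D q j
      ≤ ∑ q, if q ∈ D then (stopMat P D ^ m) i q else 0 :=
        Finset.sum_le_sum fun q _ => key q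
    _ = ∑ q ∈ D, (stopMat P D ^ m) i q := by
        rw [Finset.sum_ite_mem]; simp

lemma alphaD_antitone {P : Matrix (Fin n) (Fin n) ℝ} (hP : IsStochastic P) (D : Finset (Fin n))
    {a b : ℕ} (hab : a ≤ b) (i : Fin n) : alphaD P D b i ≤ alphaD P D a i := by
  induction b, hab using Nat.le_induction with
  | base => exact le_rfl
  | succ b hb ih => exact le_trans (alphaD_step hP D b i) ih

lemma alphaD_lt_one {P : Matrix (Fin n) (Fin n) ℝ} (hP : IsStochastic P)
    (hirr : IsIrreducible P) {D : Finset (Fin n)} (hDne : D ≠ Finset.univ) (i : Fin n) :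
    ∃ r, alphaD P D r i < 1 := by
  have hS := stopMat_stoch hP D
  obtain ⟨d, hd⟩ : ∃ d, d ∉ D := by
    by_contra h
    push_neg at h
    exact hDne (Finset.eq_univ_iff_forall.mpr h)
  by_cases hi : i ∈ D
  · obtain ⟨m, hm0, hm⟩ := hirr i d
    obtain ⟨x, hx0, hxm, hxp⟩ := exists_path hP.1 m i d hm
    have hex : ∃ t, x t ∉ D := ⟨m, hxm ▸ hd⟩
    set r := Nat.find hex with hr
    have hxr : x r ∉ D := Nat.find_spec hex
    have hrm : r ≤ m := Nat.find_le (hxm ▸ hd)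
    have hbefore : ∀ s < r, x s ∈ D := fun s hs => by
      have := Nat.find_min hex hs
      simpa using this
    have hprod : 0 < ∏ t ∈ Finset.range r, stopMat P D (x t) (x (t + 1)) := by
      apply Finset.prod_pos
      intro t ht
      rw [Finset.mem_range] at ht
      have : stopMat P D (x t) (x (t + 1)) = P (x t) (x (t + 1)) := by
        unfold stopMat; rw [if_pos (hbefore t ht)]
      rw [this]
      exact hxp t (lt_of_lt_of_le ht hrm)
    have hpow : 0 < (stopMat P D ^ r) i (x r) := by
      have := prod_path_le_pow hS.1 x r
      rw [hx0] at this
      exact lt_of_lt_of_le hprod this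
    refine ⟨r, ?_⟩
    have hsplit : alphaD P D r i + (stopMat P D ^ r) i (x r) ≤ 1 := by
      have hsub : insert (x r) D ⊆ Finset.univ := Finset.subset_univ _
      have : ∑ j ∈ insert (x r) D, (stopMat P D ^ r) i j ≤ ∑ j, (stopMat P D ^ r) i j :=
        Finset.sum_le_sum_of_subset_of_nonneg hsub
          (fun j _ _ => pow_entry_nonneg hS.1 r i j)
      rw [Finset.sum_insert hxr, (stoch_pow hS r).2 i] at this
      unfold alphaD
      linarith
    linarith
  · refine ⟨0, ?_⟩
    unfold alphaD
    simp only [pow_zero, Matrix.one_apply]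
    have : ∀ j ∈ D, (if i = j then (1:ℝ) else 0) = 0 := by
      intro j hj
      have : ¬ i = j := fun h => hi (h ▸ hj)
      simp [this]
    rw [Finset.sum_congr rfl this]
    simp

lemma exists_Mc {P : Matrix (Fin n) (Fin n) ℝ} (hP : IsStochastic P)
    (hirr : IsIrreducible P) {D : Finset (Fin n)} (hDne : D ≠ Finset.univ) (i0 : Fin n) :
    ∃ (M : ℕ) (c : ℝ), 0 ≤ c ∧ c < 1 ∧ ∀ i m, M ≤ m → alphaD P D m i ≤ c := by
  have h : ∀ i, ∃ r, alphaD P D r i < 1 := alphaD_lt_one hP hirr hDne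
  choose r hr using h
  have hne : (Finset.univ : Finset (Fin n)).Nonempty := ⟨i0, Finset.mem_univ i0⟩
  refine ⟨Finset.univ.sup r, Finset.univ.sup' hne (fun i => alphaD P D (Finset.univ.sup r) i),
    ?_, ?_, ?_⟩
  · exact le_trans (alphaD_nonneg hP D _ i0) (Finset.le_sup' _ (Finset.mem_univ i0))
  · rw [Finset.sup'_lt_iff]
    intro i _
    exact lt_of_le_of_lt (alphaD_antitone hP D (Finset.le_sup (Finset.mem_univ i)) i) (hr i)
  · intro i m hm
    exact le_trans (alphaD_antitone hP D hm i) (Finset.le_sup' _ (Finset.mem_univ i))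

lemma pow_le_pow_entrywise {A B : Matrix (Fin n) (Fin n) ℝ}
    (hA : ∀ i j, 0 ≤ A i j) (hAB : ∀ i j, A i j ≤ B i j) (m : ℕ) :
    ∀ i j, (A ^ m) i j ≤ (B ^ m) i j := by
  have hB : ∀ i j, 0 ≤ B i j := fun i j => le_trans (hA i j) (hAB i j)
  induction m with
  | zero => intro i j; simp
  | succ m ih =>
    intro i j
    rw [pow_succ, pow_succ, Matrix.mul_apply, Matrix.mul_apply]
    apply Finset.sum_le_sum
    intro q _
    exact mul_le_mul (ih i q) (hAB q j) (hA q j) (pow_entry_nonneg hB m i q)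

lemma zeroD_nonneg {A : Matrix (Fin n) (Fin n) ℝ} (hA : ∀ i j, 0 ≤ A i j)
    (D : Finset (Fin n)) : ∀ i j, 0 ≤ zeroD D A i j := by
  intro i j
  unfold zeroD
  split
  · exact hA i j
  · exact le_rfl

lemma zeroD_le {A : Matrix (Fin n) (Fin n) ℝ} (hA : ∀ i j, 0 ≤ A i j)
    (D : Finset (Fin n)) : ∀ i j, zeroD D A i j ≤ A i j := by
  intro i j
  unfold zeroD
  split
  · exact le_rfl
  · exact hA i j

lemma zeroD_pow_col {A : Matrix (Fin n) (Fin n) ℝ} (D : Finset (Fin n))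
    {j : Fin n} (hj : j ∉ D) (m : ℕ) (hm : 1 ≤ m) (i : Fin n) :
    (zeroD D A ^ m) i j = 0 := by
  obtain ⟨m', rfl⟩ : ∃ m', m = m' + 1 := ⟨m - 1, by omega⟩
  rw [pow_succ, Matrix.mul_apply]
  apply Finset.sum_eq_zero
  intro q _
  unfold zeroD
  simp [hj]

/-- row sums of powers of `zeroD D (S^τ)` are controlled by `alphaD`. -/

lemma zeroD_pow_rowsum {P : Matrix (Fin n) (Fin n) ℝ} (hP : IsStochastic P)
    (D : Finset (Fin n)) (τ : ℕ) (m : ℕ) (hm : 1 ≤ m) (i : Fin n) :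
    ∑ j, (zeroD D (stopMat P D ^ τ) ^ m) i j ≤ alphaD P D (τ * m) i := by
  have hS := stopMat_stoch hP D
  have hτs : ∀ a b, 0 ≤ (stopMat P D ^ τ) a b := pow_entry_nonneg hS.1 τ
  have hN0 : ∀ a b, 0 ≤ zeroD D (stopMat P D ^ τ) a b := zeroD_nonneg hτs D
  have hNle : ∀ a b, (zeroD D (stopMat P D ^ τ) ^ m) a b ≤ ((stopMat P D ^ τ) ^ m) a b :=
    pow_le_pow_entrywise hN0 (zeroD_le hτs D) m
  have hzero : ∀ j ∉ D, (zeroD D (stopMat P D ^ τ) ^ m) i j = 0 :=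
    fun j hj => zeroD_pow_col D hj m hm i
  have h1 : ∑ j, (zeroD D (stopMat P D ^ τ) ^ m) i j
      = ∑ j ∈ D, (zeroD D (stopMat P D ^ τ) ^ m) i j := by
    rw [← Finset.sum_subset (Finset.subset_univ D)]
    intro j _ hj
    exact hzero j hj
  rw [h1]
  have h2 : ∑ j ∈ D, (zeroD D (stopMat P D ^ τ) ^ m) i j
      ≤ ∑ j ∈ D, ((stopMat P D ^ τ) ^ m) i j :=
    Finset.sum_le_sum fun j _ => hNle i j
  rw [← pow_mul] at h2
  exact le_trans h2 (le_of_eq rfl)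

/-- `det (1 - N) ≠ 0` when some power of `N` has all row sums `≤ c < 1`. -/

lemma det_one_sub_ne_zero {N : Matrix (Fin n) (Fin n) ℝ} (i0 : Fin n)
    (hN0 : ∀ i j, 0 ≤ N i j)
    (hrow : ∃ (m : ℕ) (c : ℝ), c < 1 ∧ ∀ i, ∑ j, (N ^ m) i j ≤ c) :
    ((1 : Matrix (Fin n) (Fin n) ℝ) - N).det ≠ 0 := by
  obtain ⟨m, c, hc1, hc⟩ := hrow
  intro hdet
  obtain ⟨v, hv0, hv⟩ := Matrix.exists_mulVec_eq_zero_iff.mpr hdet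
  have hfix : N.mulVec v = v := by
    have := hv
    rw [Matrix.sub_mulVec, Matrix.one_mulVec, sub_eq_zero] at this
    exact this.symm
  have hfixm : ∀ m', (N ^ m').mulVec v = v := by
    intro m'
    induction m' with
    | zero => simp [Matrix.one_mulVec]
    | succ m' ih =>
      rw [pow_succ', ← Matrix.mulVec_mulVec, ih, hfix]
  have hNm0 : ∀ i j, 0 ≤ (N ^ m) i j := pow_entry_nonneg hN0 m
  obtain ⟨i1, _, hi1⟩ := Finset.exists_max_image Finset.univ (fun q => |v q|)
    ⟨i0, Finset.mem_univ i0⟩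
  have hBpos : 0 < |v i1| := by
    obtain ⟨q, hq⟩ := Function.ne_iff.mp hv0
    exact lt_of_lt_of_le (abs_pos.mpr hq) (hi1 q (Finset.mem_univ q))
  have heq : v i1 = ∑ j, (N ^ m) i1 j * v j := by
    conv_lhs => rw [← hfixm m]
    simp [Matrix.mulVec, dotProduct]
  have habs : |v i1| ≤ c * |v i1| := by
    calc |v i1| = |∑ j, (N ^ m) i1 j * v j| := by rw [heq]
      _ ≤ ∑ j, |(N ^ m) i1 j * v j| := Finset.abs_sum_le_sum_abs _ _
      _ = ∑ j, (N ^ m) i1 j * |v j| := by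
          apply Finset.sum_congr rfl
          intro j _
          rw [abs_mul, abs_of_nonneg (hNm0 i1 j)]
      _ ≤ ∑ j, (N ^ m) i1 j * |v i1| := by
          apply Finset.sum_le_sum
          intro j _
          exact mul_le_mul_of_nonneg_left (hi1 j (Finset.mem_univ j)) (hNm0 i1 j)
      _ = (∑ j, (N ^ m) i1 j) * |v i1| := by rw [Finset.sum_mul]
      _ ≤ c * |v i1| := mul_le_mul_of_nonneg_right (hc i1) (le_of_lt hBpos)
  nlinarith

/-! ### Probability lemmas -/

lemma exit_le_iff (D : Finset (Fin n)) (ω : ℕ → Fin n) (t : ℕ) :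
    (t : ℕ∞) ≤ exitT D ω ↔ ∀ s < t, ω s ∈ D := by
  unfold exitT
  rw [le_iInf_iff]
  constructor
  · intro h s hs
    by_contra hsD
    have h2 := h s
    rw [le_iInf_iff] at h2
    have h3 := h2 hsD
    exact absurd (Nat.cast_le.mp h3) (not_le.mpr hs)
  · intro h s
    rw [le_iInf_iff]
    intro hsD
    exact Nat.cast_le.mpr (not_lt.mp (fun hst => hsD (h s hst)))

def Cyl (m : ℕ) (x : ℕ → Fin n) : Set (ℕ → Fin n) := {ω | ∀ s ≤ m, ω s = x s}

lemma Cyl_measurable (m : ℕ) (x : ℕ → Fin n) : MeasurableSet (Cyl m x) := by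
  have h : Cyl m x = ⋂ (s : ℕ) (_ : s ≤ m), (fun ω : ℕ → Fin n => ω s) ⁻¹' {x s} := by
    ext ω; simp [Cyl]
  rw [h]
  exact MeasurableSet.iInter fun s => MeasurableSet.iInter fun _ =>
    (measurable_pi_apply s) (measurableSet_singleton (x s))

lemma cyl_measure {P : Matrix (Fin n) (Fin n) ℝ} {Pr : Fin n → Measure (ℕ → Fin n)}
    (hPr : IsMarkovFamily P Pr) (i : Fin n) (m : ℕ) (x : ℕ → Fin n) :
    Pr i (Cyl m x) = ENNReal.ofReal
      ((if x 0 = i then 1 else 0) * ∏ t ∈ Finset.range m, P (x t) (x (t + 1))) := by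
  have : IsProbabilityMeasure (Pr i) := hPr.1 i
  have hfin : Pr i (Cyl m x) ≠ ⊤ := measure_ne_top _ _
  have hset : Cyl m x = {ω | ∀ t ≤ m, ω t = x t} := rfl
  rw [← hPr.2 i m x, ← hset, ENNReal.ofReal_toReal hfin]

def extF (m : ℕ) (v : Fin (m + 1) → Fin n) : ℕ → Fin n :=
  fun s => if h : s < m + 1 then v ⟨s, h⟩ else v 0

lemma extF_apply (m : ℕ) (v : Fin (m + 1) → Fin n) (s : ℕ) (hs : s ≤ m) :
    extF m v s = v ⟨s, Nat.lt_succ_of_le hs⟩ := dif_pos _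

lemma extF_coe (m : ℕ) (v : Fin (m + 1) → Fin n) (s : Fin (m + 1)) :
    extF m v s = v s := by
  rw [extF_apply m v s (Nat.le_of_lt_succ s.isLt)]

lemma lintegral_eq_sum_cyl (μ : Measure (ℕ → Fin n)) (m : ℕ) (F : (ℕ → Fin n) → ℝ≥0∞)
    (hF : ∀ ω ω', (∀ s ≤ m, ω s = ω' s) → F ω = F ω') :
    ∫⁻ ω, F ω ∂μ = ∑ v : Fin (m + 1) → Fin n, F (extF m v) * μ (Cyl m (extF m v)) := by
  have hrepr : ∀ ω, F ω = ∑ v : Fin (m + 1) → Fin n,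
      Set.indicator (Cyl m (extF m v)) (fun _ => F (extF m v)) ω := by
    intro ω
    rw [Finset.sum_eq_single (fun s : Fin (m + 1) => ω s)]
    · have hmem : ω ∈ Cyl m (extF m (fun s : Fin (m + 1) => ω s)) := by
        intro s hs
        rw [extF_apply m _ s hs]
      rw [Set.indicator_of_mem hmem]
      exact hF ω _ (fun s hs => hmem s hs)
    · intro v _ hv
      apply Set.indicator_of_notMem
      intro hmem
      apply hv
      funext s
      have h1 := hmem s (Nat.le_of_lt_succ s.isLt)
      rw [extF_coe] at h1
      exact h1.symm
    · intro h; exact absurd (Finset.mem_univ _) h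
  calc ∫⁻ ω, F ω ∂μ
      = ∫⁻ ω, ∑ v : Fin (m + 1) → Fin n,
          Set.indicator (Cyl m (extF m v)) (fun _ => F (extF m v)) ω ∂μ :=
        lintegral_congr hrepr
    _ = ∑ v : Fin (m + 1) → Fin n,
          ∫⁻ ω, Set.indicator (Cyl m (extF m v)) (fun _ => F (extF m v)) ω ∂μ :=
        lintegral_finset_sum _ (fun v _ => (measurable_const.indicator (Cyl_measurable _ _)))
    _ = _ := Finset.sum_congr rfl fun v _ =>
        lintegral_indicator_const (Cyl_measurable _ _) _

def fterm (Pr : Fin n → Measure (ℕ → Fin n)) (D : Finset (Fin n)) (R : Fin n → ℝ)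
    (t : ℕ) (i : Fin n) : ℝ≥0∞ :=
  ∫⁻ ω, Set.indicator {ω' : ℕ → Fin n | (t : ℕ∞) ≤ exitT D ω'}
      (fun ω' => ENNReal.ofReal (R (ω' t))) ω ∂(Pr i)

lemma valueE_eq_tsum_fterm (Pr : Fin n → Measure (ℕ → Fin n)) (D : Finset (Fin n))
    (R : Fin n → ℝ) (i : Fin n) : valueE Pr D R i = ∑' t : ℕ, fterm Pr D R t i := rfl

def fE (P : Matrix (Fin n) (Fin n) ℝ) (D : Finset (Fin n)) (R : Fin n → ℝ)
    (t : ℕ) (i : Fin n) : ℝ≥0∞ :=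
  ∑ v : Fin (t + 1) → Fin n,
    (if v 0 = i then (1 : ℝ≥0∞) else 0)
    * (∏ s : Fin t, (if v s.castSucc ∈ D then (1 : ℝ≥0∞) else 0))
    * (∏ s : Fin t, ENNReal.ofReal (P (v s.castSucc) (v s.succ)))
    * ENNReal.ofReal (R (v (Fin.last t)))

lemma fterm_eq_fE {P : Matrix (Fin n) (Fin n) ℝ} {Pr : Fin n → Measure (ℕ → Fin n)}
    (hPr : IsMarkovFamily P Pr) (hP : IsStochastic P) {D : Finset (Fin n)} {R : Fin n → ℝ}
    (t : ℕ) (i : Fin n) : fterm Pr D R t i = fE P D R t i := by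
  have hF : ∀ ω ω' : ℕ → Fin n, (∀ s ≤ t, ω s = ω' s) →
      Set.indicator {ω' : ℕ → Fin n | (t : ℕ∞) ≤ exitT D ω'}
        (fun ω' => ENNReal.ofReal (R (ω' t))) ω
      = Set.indicator {ω'' : ℕ → Fin n | (t : ℕ∞) ≤ exitT D ω''}
        (fun ω'' => ENNReal.ofReal (R (ω'' t))) ω' := by
    intro ω ω' hagree
    have hmem : ω ∈ {ω' : ℕ → Fin n | (t : ℕ∞) ≤ exitT D ω'}
        ↔ ω' ∈ {ω'' : ℕ → Fin n | (t : ℕ∞) ≤ exitT D ω''} := by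
      simp only [Set.mem_setOf_eq, exit_le_iff]
      constructor
      · intro h s hs; rw [← hagree s (le_of_lt hs)]; exact h s hs
      · intro h s hs; rw [hagree s (le_of_lt hs)]; exact h s hs
    by_cases h : ω ∈ {ω' : ℕ → Fin n | (t : ℕ∞) ≤ exitT D ω'}
    · rw [Set.indicator_of_mem h, Set.indicator_of_mem (hmem.mp h), hagree t le_rfl]
    · rw [Set.indicator_of_notMem h, Set.indicator_of_notMem (fun hh => h (hmem.mpr hh))]
  rw [fterm, lintegral_eq_sum_cyl (Pr i) t _ hF, fE]
  apply Finset.sum_congr rfl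
  intro v _
  rw [cyl_measure hPr]
  -- indicator value
  have hcond : extF t v ∈ {ω' : ℕ → Fin n | (t : ℕ∞) ≤ exitT D ω'}
      ↔ ∀ s : Fin t, v s.castSucc ∈ D := by
    simp only [Set.mem_setOf_eq, exit_le_iff]
    constructor
    · intro h s
      have := h s (s.isLt)
      rwa [extF_apply t v s (le_of_lt s.isLt)] at this
    · intro h s hs
      rw [extF_apply t v s (le_of_lt hs)]
      exact h ⟨s, hs⟩
  have hρ : ∏ s : Fin t, (if v s.castSucc ∈ D then (1 : ℝ≥0∞) else 0)
      = if ∀ s : Fin t, v s.castSucc ∈ D then 1 else 0 := by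
    rw [Finset.prod_boole]
    simp
  have hif0 : extF t v 0 = v 0 := by
    have : (0 : ℕ) = ((0 : Fin (t + 1)) : ℕ) := rfl
    exact extF_coe t v 0
  have hlast : extF t v t = v (Fin.last t) := by
    rw [extF_apply t v t le_rfl]
    exact congrArg v (Fin.ext rfl)
  have hprod : ENNReal.ofReal (∏ s ∈ Finset.range t, P (extF t v s) (extF t v (s + 1)))
      = ∏ s : Fin t, ENNReal.ofReal (P (v s.castSucc) (v s.succ)) := by
    rw [ENNReal.ofReal_prod_of_nonneg (fun s _ => hP.1 _ _)]
    rw [← Fin.prod_univ_eq_prod_range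
      (fun s : ℕ => ENNReal.ofReal (P (extF t v s) (extF t v (s + 1)))) t]
    apply Finset.prod_congr rfl
    intro s _
    have h1 : extF t v s = v s.castSucc := by
      rw [extF_apply t v s (le_of_lt s.isLt)]
      exact congrArg v (Fin.ext rfl)
    have h2 : extF t v (s + 1) = v s.succ := by
      rw [extF_apply t v (s + 1) s.isLt]
      exact congrArg v (Fin.ext rfl)
    rw [h1, h2]
  rw [Set.indicator_apply]
  rw [ENNReal.ofReal_mul (by split <;> norm_num)]
  rw [hprod]
  have hof : ENNReal.ofReal (if extF t v 0 = i then (1:ℝ) else 0)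
      = if v 0 = i then (1 : ℝ≥0∞) else 0 := by
    rw [hif0]; split <;> simp
  rw [hof, hρ, hlast]
  by_cases hc : ∀ s : Fin t, v s.castSucc ∈ D
  · rw [if_pos (hcond.mpr hc), if_pos hc]
    ring
  · rw [if_neg (fun hh => hc (hcond.mp hh)), if_neg hc]
    ring

lemma fE_zero (P : Matrix (Fin n) (Fin n) ℝ) (D : Finset (Fin n)) (R : Fin n → ℝ) (i : Fin n) :
    fE P D R 0 i = ENNReal.ofReal (R i) := by
  unfold fE
  rw [← Fintype.sum_equiv ((Equiv.funUnique (Fin 1) (Fin n)).symm)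
    (fun j => (if j = i then (1 : ℝ≥0∞) else 0) * ENNReal.ofReal (R j)) _ ?_]
  · simp [Finset.sum_ite_eq']
  · intro j
    simp [Equiv.funUnique]

lemma fE_succ (P : Matrix (Fin n) (Fin n) ℝ) (D : Finset (Fin n)) (R : Fin n → ℝ)
    (t : ℕ) (i : Fin n) :
    fE P D R (t + 1) i
      = (if i ∈ D then (1 : ℝ≥0∞) else 0) * ∑ j, ENNReal.ofReal (P i j) * fE P D R t j := by
  -- common normal form
  set G : (Fin (t + 1) → Fin n) → ℝ≥0∞ := fun w =>
    (if i ∈ D then (1 : ℝ≥0∞) else 0)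
    * (∏ s : Fin t, (if w s.castSucc ∈ D then (1 : ℝ≥0∞) else 0))
    * ((ENNReal.ofReal (P i (w 0)) * ∏ s : Fin t, ENNReal.ofReal (P (w s.castSucc) (w s.succ)))
    * ENNReal.ofReal (R (w (Fin.last t)))) with hG
  have hRHS : (if i ∈ D then (1 : ℝ≥0∞) else 0) * ∑ j, ENNReal.ofReal (P i j) * fE P D R t j
      = ∑ w : Fin (t + 1) → Fin n, G w := by
    have h1 : ∀ j, ENNReal.ofReal (P i j) * fE P D R t j
        = ∑ w : Fin (t + 1) → Fin n, (if w 0 = j then (1 : ℝ≥0∞) else 0) *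
            ((∏ s : Fin t, (if w s.castSucc ∈ D then (1 : ℝ≥0∞) else 0))
             * ((ENNReal.ofReal (P i j)
                 * ∏ s : Fin t, ENNReal.ofReal (P (w s.castSucc) (w s.succ)))
             * ENNReal.ofReal (R (w (Fin.last t))))) := by
      intro j
      rw [fE, Finset.mul_sum]
      apply Finset.sum_congr rfl
      intro w _
      ring
    rw [Finset.sum_congr rfl (fun j _ => h1 j), Finset.sum_comm, Finset.mul_sum]
    apply Finset.sum_congr rfl
    intro w _
    rw [Finset.sum_congr rfl (fun j _ => boole_mul (w 0 = j) _), Finset.sum_ite_eq]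
    simp only [Finset.mem_univ, if_true, hG]
    ring
  rw [hRHS, fE]
  rw [← Fintype.sum_equiv (Fin.consEquiv (fun _ : Fin (t + 2) => Fin n))
    (fun p : Fin n × (Fin (t + 1) → Fin n) =>
      (if (Fin.cons p.1 p.2 : Fin (t + 2) → Fin n) 0 = i then (1 : ℝ≥0∞) else 0)
      * (∏ s : Fin (t + 1),
          (if (Fin.cons p.1 p.2 : Fin (t + 2) → Fin n) s.castSucc ∈ D then (1 : ℝ≥0∞) else 0))
      * (∏ s : Fin (t + 1), ENNReal.ofReal (P ((Fin.cons p.1 p.2 : Fin (t + 2) → Fin n) s.castSucc)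
          ((Fin.cons p.1 p.2 : Fin (t + 2) → Fin n) s.succ)))
      * ENNReal.ofReal (R ((Fin.cons p.1 p.2 : Fin (t + 2) → Fin n) (Fin.last (t + 1))))) _
    (fun p => rfl)]
  rw [Fintype.sum_prod_type]
  -- simplify each (j, w) term
  have hterm : ∀ (j : Fin n) (w : Fin (t + 1) → Fin n),
      (if (Fin.cons j w : Fin (t + 2) → Fin n) 0 = i then (1 : ℝ≥0∞) else 0)
      * (∏ s : Fin (t + 1),
          (if (Fin.cons j w : Fin (t + 2) → Fin n) s.castSucc ∈ D then (1 : ℝ≥0∞) else 0))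
      * (∏ s : Fin (t + 1), ENNReal.ofReal (P ((Fin.cons j w : Fin (t + 2) → Fin n) s.castSucc)
          ((Fin.cons j w : Fin (t + 2) → Fin n) s.succ)))
      * ENNReal.ofReal (R ((Fin.cons j w : Fin (t + 2) → Fin n) (Fin.last (t + 1))))
      = if j = i then
          ((if j ∈ D then (1 : ℝ≥0∞) else 0)
          * (∏ s : Fin t, (if w s.castSucc ∈ D then (1 : ℝ≥0∞) else 0))
          * ((ENNReal.ofReal (P j (w 0))
              * ∏ s : Fin t, ENNReal.ofReal (P (w s.castSucc) (w s.succ)))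
          * ENNReal.ofReal (R (w (Fin.last t))))) else 0 := by
    intro j w
    have hp1 : ∏ s : Fin (t + 1),
        (if (Fin.cons j w : Fin (t + 2) → Fin n) s.castSucc ∈ D then (1 : ℝ≥0∞) else 0)
        = (if j ∈ D then (1 : ℝ≥0∞) else 0)
          * ∏ s : Fin t, (if w s.castSucc ∈ D then (1 : ℝ≥0∞) else 0) := by
      rw [Fin.prod_univ_succ, Fin.castSucc_zero, Fin.cons_zero]
      exact congrArg _ (Finset.prod_congr rfl
        (fun s _ => by rw [← Fin.succ_castSucc, Fin.cons_succ]))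
    have hp2 : ∏ s : Fin (t + 1), ENNReal.ofReal
          (P ((Fin.cons j w : Fin (t + 2) → Fin n) s.castSucc)
             ((Fin.cons j w : Fin (t + 2) → Fin n) s.succ))
        = ENNReal.ofReal (P j (w 0))
          * ∏ s : Fin t, ENNReal.ofReal (P (w s.castSucc) (w s.succ)) := by
      rw [Fin.prod_univ_succ, Fin.castSucc_zero, Fin.cons_zero, Fin.cons_succ]
      exact congrArg _ (Finset.prod_congr rfl (fun s _ => by
        rw [← Fin.succ_castSucc, Fin.cons_succ, Fin.cons_succ]))
    have hp3 : (Fin.cons j w : Fin (t + 2) → Fin n) (Fin.last (t + 1)) = w (Fin.last t) := by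
      rw [← Fin.succ_last, Fin.cons_succ]
    rw [hp1, hp2, hp3, Fin.cons_zero]
    by_cases hj : j = i
    · rw [if_pos hj, if_pos hj]
      ring
    · rw [if_neg hj, if_neg hj]
      simp
  rw [Finset.sum_congr rfl (fun j _ => Finset.sum_congr rfl (fun w _ => hterm j w))]
  rw [Finset.sum_comm]
  apply Finset.sum_congr rfl
  intro w _
  rw [Finset.sum_ite_eq']
  simp only [Finset.mem_univ, if_true, hG]

lemma fterm_zero {P : Matrix (Fin n) (Fin n) ℝ} {Pr : Fin n → Measure (ℕ → Fin n)}
    (hPr : IsMarkovFamily P Pr) (hP : IsStochastic P) (D : Finset (Fin n)) (R : Fin n → ℝ)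
    (i : Fin n) : fterm Pr D R 0 i = ENNReal.ofReal (R i) := by
  rw [fterm_eq_fE hPr hP, fE_zero]

lemma fterm_succ {P : Matrix (Fin n) (Fin n) ℝ} {Pr : Fin n → Measure (ℕ → Fin n)}
    (hPr : IsMarkovFamily P Pr) (hP : IsStochastic P) (D : Finset (Fin n)) (R : Fin n → ℝ)
    (t : ℕ) (i : Fin n) :
    fterm Pr D R (t + 1) i
      = (if i ∈ D then (1 : ℝ≥0∞) else 0) * ∑ j, ENNReal.ofReal (P i j) * fterm Pr D R t j := by
  rw [fterm_eq_fE hPr hP, fE_succ]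
  congr 1
  exact Finset.sum_congr rfl fun j _ => by rw [fterm_eq_fE hPr hP]

/-- Bellman equation for `valueE` in `ℝ≥0∞`. -/

lemma valueE_bellman {P : Matrix (Fin n) (Fin n) ℝ} {Pr : Fin n → Measure (ℕ → Fin n)}
    (hPr : IsMarkovFamily P Pr) (hP : IsStochastic P) (D : Finset (Fin n)) (R : Fin n → ℝ)
    (i : Fin n) :
    valueE Pr D R i = ENNReal.ofReal (R i)
      + (if i ∈ D then (1 : ℝ≥0∞) else 0) * ∑ j, ENNReal.ofReal (P i j) * valueE Pr D R j := by
  rw [valueE_eq_tsum_fterm, tsum_eq_zero_add' ENNReal.summable, fterm_zero hPr hP]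
  congr 1
  calc ∑' t : ℕ, fterm Pr D R (t + 1) i
      = ∑' t : ℕ, (if i ∈ D then (1 : ℝ≥0∞) else 0)
          * ∑ j, ENNReal.ofReal (P i j) * fterm Pr D R t j :=
        tsum_congr fun t => fterm_succ hPr hP D R t i
    _ = (if i ∈ D then (1 : ℝ≥0∞) else 0)
          * ∑' t : ℕ, ∑ j, ENNReal.ofReal (P i j) * fterm Pr D R t j :=
        ENNReal.tsum_mul_left
    _ = (if i ∈ D then (1 : ℝ≥0∞) else 0)
          * ∑ j, ∑' t : ℕ, ENNReal.ofReal (P i j) * fterm Pr D R t j := by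
        rw [Summable.tsum_finsetSum (fun j _ => ENNReal.summable)]
    _ = (if i ∈ D then (1 : ℝ≥0∞) else 0) * ∑ j, ENNReal.ofReal (P i j) * valueE Pr D R j := by
        congr 1
        exact Finset.sum_congr rfl fun j _ => by
          rw [ENNReal.tsum_mul_left, valueE_eq_tsum_fterm]

/-! ### Finiteness of the value function -/

/-- taboo transition matrix. -/

def Qmat (P : Matrix (Fin n) (Fin n) ℝ) (D : Finset (Fin n)) : Matrix (Fin n) (Fin n) ℝ :=
  fun i j => if i ∈ D then P i j else 0

lemma Qmat_nonneg {P : Matrix (Fin n) (Fin n) ℝ} (hP : IsStochastic P) (D : Finset (Fin n)) :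
    ∀ i j, 0 ≤ Qmat P D i j := by
  intro i j
  unfold Qmat
  split
  · exact hP.1 i j
  · exact le_rfl

lemma Qmat_le_stopMat {P : Matrix (Fin n) (Fin n) ℝ} (hP : IsStochastic P) (D : Finset (Fin n)) :
    ∀ i j, Qmat P D i j ≤ stopMat P D i j := by
  intro i j
  unfold Qmat stopMat
  by_cases h : i ∈ D
  · simp [h]
  · simp only [if_neg h]
    split <;> norm_num

def rhoQ (P : Matrix (Fin n) (Fin n) ℝ) (D : Finset (Fin n)) (t : ℕ) (i : Fin n) : ℝ :=
  ∑ j, (Qmat P D ^ t) i j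

lemma rhoQ_zero (P : Matrix (Fin n) (Fin n) ℝ) (D : Finset (Fin n)) (i : Fin n) :
    rhoQ P D 0 i = 1 := by
  unfold rhoQ
  simp [Matrix.one_apply]

lemma rhoQ_succ (P : Matrix (Fin n) (Fin n) ℝ) (D : Finset (Fin n)) (t : ℕ) (i : Fin n) :
    rhoQ P D (t + 1) i = if i ∈ D then ∑ q, P i q * rhoQ P D t q else 0 := by
  unfold rhoQ
  rw [pow_succ', rowsum_mul]
  by_cases h : i ∈ D
  · rw [if_pos h]
    exact Finset.sum_congr rfl fun q _ => by rw [Qmat, if_pos h]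
  · rw [if_neg h]
    apply Finset.sum_eq_zero
    intro q _
    rw [Qmat, if_neg h, zero_mul]

lemma rhoQ_nonneg {P : Matrix (Fin n) (Fin n) ℝ} (hP : IsStochastic P) (D : Finset (Fin n))
    (t : ℕ) (i : Fin n) : 0 ≤ rhoQ P D t i :=
  Finset.sum_nonneg fun j _ => pow_entry_nonneg (Qmat_nonneg hP D) t i j

lemma rhoQ_le_one {P : Matrix (Fin n) (Fin n) ℝ} (hP : IsStochastic P) (D : Finset (Fin n)) :
    ∀ t i, rhoQ P D t i ≤ 1 := by
  intro t
  induction t with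
  | zero => intro i; rw [rhoQ_zero]
  | succ t ih =>
    intro i
    rw [rhoQ_succ]
    split
    · calc ∑ q, P i q * rhoQ P D t q ≤ ∑ q, P i q * 1 :=
            Finset.sum_le_sum fun q _ => mul_le_mul_of_nonneg_left (ih q) (hP.1 i q)
        _ = 1 := by simp [hP.2 i]
    · norm_num

lemma rhoQ_le_alphaD {P : Matrix (Fin n) (Fin n) ℝ} (hP : IsStochastic P) (D : Finset (Fin n))
    (t : ℕ) (i : Fin n) : rhoQ P D (t + 1) i ≤ alphaD P D t i := by
  have hq := Qmat_nonneg hP D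
  have hle := pow_le_pow_entrywise hq (Qmat_le_stopMat hP D) t
  unfold rhoQ
  rw [pow_succ, rowsum_mul]
  have h1 : ∀ q, ∑ j, Qmat P D q j = if q ∈ D then 1 else 0 := by
    intro q
    unfold Qmat
    by_cases h : q ∈ D <;> simp [h, hP.2 q]
  calc ∑ q, (Qmat P D ^ t) i q * ∑ j, Qmat P D q j
      = ∑ q, (if q ∈ D then (Qmat P D ^ t) i q else 0) := by
        apply Finset.sum_congr rfl
        intro q _
        rw [h1 q]
        split <;> simp
    _ = ∑ q ∈ D, (Qmat P D ^ t) i q := by rw [Finset.sum_ite_mem]; simp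
    _ ≤ ∑ q ∈ D, (stopMat P D ^ t) i q := Finset.sum_le_sum fun q _ => hle i q
    _ = alphaD P D t i := rfl

lemma rhoQ_geo {P : Matrix (Fin n) (Fin n) ℝ} (hP : IsStochastic P) (D : Finset (Fin n))
    {M : ℕ} {c : ℝ} (hc0 : 0 ≤ c) (hc : ∀ i m, M ≤ m → alphaD P D m i ≤ c) :
    ∀ s t i, s * (M + 1) ≤ t → rhoQ P D t i ≤ c ^ s := by
  intro s
  induction s with
  | zero => intro t i _; simpa using rhoQ_le_one hP D t i
  | succ s ih =>
    intro t i ht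
    have h1 : M + 1 ≤ t := le_trans (by nlinarith) ht
    obtain ⟨t', rfl⟩ : ∃ t', t = (M + 1) + t' := ⟨t - (M + 1), by omega⟩
    have ht' : s * (M + 1) ≤ t' := by nlinarith
    unfold rhoQ
    rw [pow_add, rowsum_mul]
    have key : ∀ q, (Qmat P D ^ (M + 1)) i q * (∑ j, (Qmat P D ^ t') q j)
        ≤ (Qmat P D ^ (M + 1)) i q * c ^ s := fun q =>
      mul_le_mul_of_nonneg_left (ih t' q ht')
        (pow_entry_nonneg (Qmat_nonneg hP D) (M + 1) i q)
    calc ∑ q, (Qmat P D ^ (M + 1)) i q * ∑ j, (Qmat P D ^ t') q j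
        ≤ ∑ q, (Qmat P D ^ (M + 1)) i q * c ^ s := Finset.sum_le_sum fun q _ => key q
      _ = rhoQ P D (M + 1) i * c ^ s := by rw [← Finset.sum_mul]; rfl
      _ ≤ c * c ^ s := by
          apply mul_le_mul_of_nonneg_right _ (pow_nonneg hc0 s)
          exact le_trans (rhoQ_le_alphaD hP D M i) (hc i M le_rfl)
      _ = c ^ (s + 1) := by rw [pow_succ]; ring

lemma fterm_le {P : Matrix (Fin n) (Fin n) ℝ} {Pr : Fin n → Measure (ℕ → Fin n)}
    (hPr : IsMarkovFamily P Pr) (hP : IsStochastic P) (D : Finset (Fin n)) {R : Fin n → ℝ}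
    (hR : ∀ a, 0 ≤ R a) {Rm : ℝ} (hRm : ∀ a, R a ≤ Rm) :
    ∀ t i, fterm Pr D R t i ≤ ENNReal.ofReal (Rm * rhoQ P D t i) := by
  intro t
  induction t with
  | zero =>
    intro i
    rw [fterm_zero hPr hP, rhoQ_zero, mul_one]
    exact ENNReal.ofReal_le_ofReal (hRm i)
  | succ t ih =>
    intro i
    rw [fterm_succ hPr hP, rhoQ_succ]
    by_cases h : i ∈ D
    · rw [if_pos h, if_pos h, one_mul]
      calc ∑ j, ENNReal.ofReal (P i j) * fterm Pr D R t j
          ≤ ∑ j, ENNReal.ofReal (P i j) * ENNReal.ofReal (Rm * rhoQ P D t j) :=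
            Finset.sum_le_sum fun j _ => mul_le_mul_right (ih j) _
        _ = ∑ j, ENNReal.ofReal (P i j * (Rm * rhoQ P D t j)) := by
            exact Finset.sum_congr rfl fun j _ => (ENNReal.ofReal_mul (hP.1 i j)).symm
        _ = ENNReal.ofReal (∑ j, P i j * (Rm * rhoQ P D t j)) := by
            rw [ENNReal.ofReal_sum_of_nonneg]
            intro j _
            have h0 : 0 ≤ Rm := le_trans (hR i) (hRm i)
            exact mul_nonneg (hP.1 i j) (mul_nonneg h0 (rhoQ_nonneg hP D t j))
        _ = ENNReal.ofReal (Rm * ∑ q, P i q * rhoQ P D t q) := by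
            congr 1
            rw [Finset.mul_sum]
            exact Finset.sum_congr rfl fun j _ => by ring
    · rw [if_neg h, if_neg h, zero_mul, mul_zero]
      exact zero_le

lemma valueE_ne_top {P : Matrix (Fin n) (Fin n) ℝ} {Pr : Fin n → Measure (ℕ → Fin n)}
    (hPr : IsMarkovFamily P Pr) (hP : IsStochastic P) (hirr : IsIrreducible P)
    {D : Finset (Fin n)} (hDne : D ≠ Finset.univ) {R : Fin n → ℝ}
    (hR : ∀ a, 0 ≤ R a) (i : Fin n) : valueE Pr D R i ≠ ⊤ := by
  obtain ⟨M, c, hc0, hc1, hc⟩ := exists_Mc hP hirr hDne i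
  have hne : (Finset.univ : Finset (Fin n)).Nonempty := ⟨i, Finset.mem_univ i⟩
  set Rm : ℝ := Finset.univ.sup' hne R with hRm
  have hRmax : ∀ a, R a ≤ Rm := fun a => Finset.le_sup' R (Finset.mem_univ a)
  have hRm0 : 0 ≤ Rm := le_trans (hR i) (hRmax i)
  have hbound : ∀ t, fterm Pr D R t i
      ≤ ENNReal.ofReal Rm * (ENNReal.ofReal c) ^ (t / (M + 1)) := by
    intro t
    calc fterm Pr D R t i ≤ ENNReal.ofReal (Rm * rhoQ P D t i) :=
          fterm_le hPr hP D hR hRmax t i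
      _ ≤ ENNReal.ofReal (Rm * c ^ (t / (M + 1))) := by
          apply ENNReal.ofReal_le_ofReal
          apply mul_le_mul_of_nonneg_left _ hRm0
          exact rhoQ_geo hP D hc0 hc (t / (M + 1)) t i (Nat.div_mul_le_self t (M + 1))
      _ = ENNReal.ofReal Rm * (ENNReal.ofReal c) ^ (t / (M + 1)) := by
          rw [ENNReal.ofReal_mul hRm0, ENNReal.ofReal_pow hc0]
  have hsum : ∑' t : ℕ, ENNReal.ofReal Rm * (ENNReal.ofReal c) ^ (t / (M + 1)) ≠ ⊤ := by
    rw [ENNReal.tsum_mul_left]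
    apply ENNReal.mul_ne_top ENNReal.ofReal_ne_top
    set r : ℝ≥0∞ := ENNReal.ofReal c with hr
    have hrlt : r < 1 := by
      rw [hr]
      exact ENNReal.ofReal_lt_one.mpr hc1
    have hgeo : (∑' s : ℕ, r ^ s) ≠ ⊤ := by
      rw [ENNReal.tsum_geometric, Ne, ENNReal.inv_eq_top]
      exact (tsub_pos_of_lt hrlt).ne'
    have hMne : (M + 1 : ℝ≥0∞) ≠ ⊤ := by simp
    have hEq : (∑' t : ℕ, r ^ (t / (M + 1)))
        = ∑' p : ℕ × Fin (M + 1), r ^ p.1 := by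
      rw [← Equiv.tsum_eq (Nat.divModEquiv (M + 1)).symm (fun t : ℕ => r ^ (t / (M + 1)))]
      apply tsum_congr
      intro p
      congr 1
      exact congrArg Prod.fst ((Nat.divModEquiv (M + 1)).apply_symm_apply p)
    rw [hEq]
    rw [show (∑' p : ℕ × Fin (M + 1), r ^ p.1)
        = ∑' (a : ℕ) (_ : Fin (M + 1)), r ^ a from
      ENNReal.tsum_prod (f := fun (a : ℕ) (_ : Fin (M + 1)) => r ^ a)]
    have h2 : ∀ a : ℕ, (∑' _ : Fin (M + 1), r ^ a) = (M + 1 : ℝ≥0∞) * r ^ a := by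
      intro a
      rw [tsum_fintype]
      simp [Finset.sum_const, mul_comm]
    rw [tsum_congr h2, ENNReal.tsum_mul_left]
    exact ENNReal.mul_ne_top hMne hgeo
  rw [valueE_eq_tsum_fterm]
  exact ne_top_of_le_ne_top hsum (ENNReal.tsum_le_tsum hbound)

/-! ### Real-valued Bellman equations -/

section Value

variable {P : Matrix (Fin n) (Fin n) ℝ} {Pr : Fin n → Measure (ℕ → Fin n)}
  {D : Finset (Fin n)} {R : Fin n → ℝ}

lemma valueR_notD (hPr : IsMarkovFamily P Pr) (hP : IsStochastic P)
    (hR : ∀ a, 0 ≤ R a) {i : Fin n} (hi : i ∉ D) : valueR Pr D R i = R i := by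
  have h := valueE_bellman hPr hP D R i
  rw [if_neg hi, zero_mul, add_zero] at h
  rw [valueR, h, ENNReal.toReal_ofReal (hR i)]

lemma valueR_bellman_D (hPr : IsMarkovFamily P Pr) (hP : IsStochastic P)
    (hirr : IsIrreducible P) (hDne : D ≠ Finset.univ)
    (hR : ∀ a, 0 ≤ R a) {i : Fin n} (hi : i ∈ D) :
    valueR Pr D R i = R i + ∑ j, P i j * valueR Pr D R j := by
  have h := valueE_bellman hPr hP D R i
  rw [if_pos hi, one_mul] at h
  have hne : ∀ j, valueE Pr D R j ≠ ⊤ := fun j => valueE_ne_top hPr hP hirr hDne hR j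
  have hterm : ∀ j, ENNReal.ofReal (P i j) * valueE Pr D R j ≠ ⊤ :=
    fun j => ENNReal.mul_ne_top ENNReal.ofReal_ne_top (hne j)
  have hsumne : (∑ j, ENNReal.ofReal (P i j) * valueE Pr D R j) ≠ ⊤ := by
    rw [← lt_top_iff_ne_top]
    exact ENNReal.sum_lt_top.mpr (fun j _ => lt_top_iff_ne_top.mpr (hterm j))
  calc valueR Pr D R i = (valueE Pr D R i).toReal := rfl
    _ = (ENNReal.ofReal (R i) + ∑ j, ENNReal.ofReal (P i j) * valueE Pr D R j).toReal := by
        rw [← h]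
    _ = R i + ∑ j, P i j * valueR Pr D R j := by
        rw [ENNReal.toReal_add ENNReal.ofReal_ne_top hsumne, ENNReal.toReal_ofReal (hR i)]
        congr 1
        rw [ENNReal.toReal_sum (fun j _ => hterm j)]
        exact Finset.sum_congr rfl fun j _ => by
          rw [ENNReal.toReal_mul, ENNReal.toReal_ofReal (hP.1 i j)]
          rfl

lemma u_eq_RD_add (hPr : IsMarkovFamily P Pr) (hP : IsStochastic P)
    (hirr : IsIrreducible P) (hDne : D ≠ Finset.univ) (hR : ∀ a, 0 ≤ R a) (a : Fin n) :
    valueR Pr D R a = RD D R a + (stopMat P D).mulVec (fun b => valueR Pr D R b) a := by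
  by_cases h : a ∈ D
  · rw [RD, if_pos h]
    have hrow : (stopMat P D).mulVec (fun b => valueR Pr D R b) a
        = ∑ j, P a j * valueR Pr D R j := by
      rw [Matrix.mulVec, dotProduct]
      exact Finset.sum_congr rfl fun j _ => by rw [stopMat, if_pos h]
    rw [hrow]
    exact valueR_bellman_D hPr hP hirr hDne hR h
  · rw [RD, if_neg h]
    have hrow : (stopMat P D).mulVec (fun b => valueR Pr D R b) a = valueR Pr D R a := by
      rw [Matrix.mulVec, dotProduct]
      have : ∀ j, stopMat P D a j * valueR Pr D R j
          = if j = a then valueR Pr D R j else 0 := by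
        intro j
        rw [stopMat, if_neg h]
        by_cases hj : a = j
        · subst hj; simp
        · have : ¬ j = a := fun hh => hj hh.symm
          simp [hj, this]
      rw [Finset.sum_congr rfl fun j _ => this j, Finset.sum_ite_eq']
      simp
    rw [hrow, zero_add]

lemma u_eq_pow_sum (hPr : IsMarkovFamily P Pr) (hP : IsStochastic P)
    (hirr : IsIrreducible P) (hDne : D ≠ Finset.univ) (hR : ∀ a, 0 ≤ R a) (τ : ℕ) :
    (fun a => valueR Pr D R a)
      = (fun a => ∑ t ∈ Finset.range τ, ((stopMat P D ^ t).mulVec (RD D R)) a)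
        + (stopMat P D ^ τ).mulVec (fun a => valueR Pr D R a) := by
  induction τ with
  | zero =>
    funext a
    simp [Matrix.one_mulVec]
  | succ τ ih =>
    have hstep : (fun a => valueR Pr D R a)
        = RD D R + (stopMat P D).mulVec (fun b => valueR Pr D R b) := by
      funext a
      exact u_eq_RD_add hPr hP hirr hDne hR a
    conv_lhs => rw [ih]
    funext a
    simp only [Pi.add_apply]
    rw [Finset.sum_range_succ]
    have h2 : (stopMat P D ^ (τ + 1)).mulVec (fun a => valueR Pr D R a) a
        = (stopMat P D ^ τ).mulVec ((stopMat P D).mulVec (fun b => valueR Pr D R b)) a := by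
      rw [Matrix.mulVec_mulVec, ← pow_succ]
    rw [h2]
    have h3 : (stopMat P D).mulVec (fun b => valueR Pr D R b)
        = (fun b => valueR Pr D R b) - RD D R := by
      funext b
      have := u_eq_RD_add hPr hP hirr hDne hR b
      simp only [Pi.sub_apply]
      linarith
    rw [h3, Matrix.mulVec_sub]
    simp only [Pi.sub_apply]
    ring

lemma bellman_system (hPr : IsMarkovFamily P Pr) (hP : IsStochastic P)
    (hirr : IsIrreducible P) (hDne : D ≠ Finset.univ) (hR : ∀ a, 0 ≤ R a) (τ : ℕ) :
    ((1 : Matrix (Fin n) (Fin n) ℝ) - zeroD D (stopMat P D ^ τ)).mulVec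
        (fun a => valueR Pr D R a)
      = (fun a => ∑ t ∈ Finset.range τ, ((stopMat P D ^ t).mulVec (RD D R)) a)
        + (stopMat P D ^ τ).mulVec (fun a => if a ∈ D then 0 else R a)
        - (zeroD D (stopMat P D ^ τ)).mulVec (fun a => if a ∈ D then 0 else R a) := by
  funext a
  have hkey : ∀ j, ((stopMat P D ^ τ) a j - zeroD D (stopMat P D ^ τ) a j) * valueR Pr D R j
      = ((stopMat P D ^ τ) a j - zeroD D (stopMat P D ^ τ) a j)
        * (if j ∈ D then 0 else R j) := by
    intro j
    by_cases hj : j ∈ D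
    · have hz : (stopMat P D ^ τ) a j - zeroD D (stopMat P D ^ τ) a j = 0 := by
        by_cases ha : a ∈ D
        · rw [zeroD, if_pos ⟨ha, hj⟩]; ring
        · have h1 : (stopMat P D ^ τ) a j = 0 := by
            rw [stopMat_pow_notD D ha τ j]
            have hne : ¬ a = j := fun h => ha (h ▸ hj)
            simp [hne]
          have h2 : zeroD D (stopMat P D ^ τ) a j = 0 := by
            rw [zeroD]
            simp [ha]
          rw [h1, h2]; ring
      rw [hz]; ring
    · rw [valueR_notD hPr hP hR hj, if_neg hj]
  have hu := congrFun (u_eq_pow_sum hPr hP hirr hDne hR τ) a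
  simp only [Pi.add_apply] at hu
  simp only [Matrix.sub_mulVec, Matrix.one_mulVec, Pi.sub_apply, Pi.add_apply]
  have hdiff : (stopMat P D ^ τ).mulVec (fun b => valueR Pr D R b) a
        - (zeroD D (stopMat P D ^ τ)).mulVec (fun b => valueR Pr D R b) a
      = (stopMat P D ^ τ).mulVec (fun j => if j ∈ D then 0 else R j) a
        - (zeroD D (stopMat P D ^ τ)).mulVec (fun j => if j ∈ D then 0 else R j) a := by
    simp only [Matrix.mulVec, dotProduct]
    rw [← Finset.sum_sub_distrib, ← Finset.sum_sub_distrib]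
    apply Finset.sum_congr rfl
    intro j _
    rw [← sub_mul, ← sub_mul]
    exact hkey j
  linarith [hu, hdiff]

lemma det_ne_main (hP : IsStochastic P) (hirr : IsIrreducible P)
    (hDne : D ≠ Finset.univ) (i0 : Fin n) {τ : ℕ} (hτ : 1 ≤ τ) :
    ((1 : Matrix (Fin n) (Fin n) ℝ) - zeroD D (stopMat P D ^ τ)).det ≠ 0 := by
  obtain ⟨M, c, hc0, hc1, hc⟩ := exists_Mc hP hirr hDne i0
  apply det_one_sub_ne_zero i0
    (zeroD_nonneg (pow_entry_nonneg (stopMat_stoch hP D).1 τ) D)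
  refine ⟨M + 1, c, hc1, fun i => ?_⟩
  calc ∑ j, (zeroD D (stopMat P D ^ τ) ^ (M + 1)) i j
      ≤ alphaD P D (τ * (M + 1)) i := zeroD_pow_rowsum hP D τ (M + 1) (by omega) i
    _ ≤ c := hc i (τ * (M + 1)) (by nlinarith)

end Value


/-- The solution `v_ε` of the perturbed Bellman system
`(I - (S^τ_ε)_D) v = ∑_{t<τ} S^t R_D + (S^τ_ε - (S^τ_ε)_D) R_{Dᶜ}`, where
`S^τ_ε = S^τ + ε (e_k e_ℓᵀ - e_k e_kᵀ)` (given by the matrix-inverse formula, which is the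
unique solution whenever `I - (S^τ_ε)_D` is invertible, in particular for all `ε` in a
neighborhood of `0`). -/
def perturbedSol {n : ℕ} (P : Matrix (Fin n) (Fin n) ℝ) (D : Finset (Fin n))
    (R : Fin n → ℝ) (τ : ℕ) (k ℓ : Fin n) (ε : ℝ) : Fin n → ℝ :=
  let Sτε : Matrix (Fin n) (Fin n) ℝ :=
    stopMat P D ^ τ + ε • (Matrix.single k ℓ (1 : ℝ) - Matrix.single k k 1)
  ((1 : Matrix (Fin n) (Fin n) ℝ) - zeroD D Sτε)⁻¹.mulVec
    ((fun a => ∑ t ∈ Finset.range τ, ((stopMat P D ^ t).mulVec (RD D R)) a)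
      + Sτε.mulVec (fun a => if a ∈ D then 0 else R a)
      - (zeroD D Sτε).mulVec (fun a => if a ∈ D then 0 else R a))

/-- Eqs. (37)–(38) of the paper: the solution of the Bellman system is a
differentiable function of the entry `S^τ(k,ℓ)`, with `v_0 = u` and
`d/dε v_ε(i)|_{ε=0} = (e_iᵀ (I - S_D^τ)⁻¹ e_k) (u(ℓ) - u(k))`. -/
theorem stmt14 {n : ℕ} (hn : 2 ≤ n) (D : Finset (Fin n)) (hD : D.Nonempty)
    (hDne : D ≠ Finset.univ)
    (P : Matrix (Fin n) (Fin n) ℝ) (hP : IsStochastic P) (hirr : IsIrreducible P)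
    (Pr : Fin n → Measure (ℕ → Fin n)) (hPr : IsMarkovFamily P Pr)
    (R : Fin n → ℝ) (hR : ∀ a, 0 ≤ R a)
    (τ : ℕ) (hτ : 1 ≤ τ)
    (k : Fin n) (hk : k ∈ D) (ℓ : Fin n) (hℓ : ℓ ≠ k) (i : Fin n) :
    perturbedSol P D R τ k ℓ 0 = (fun a => valueR Pr D R a) ∧
    HasDerivAt (fun ε : ℝ => perturbedSol P D R τ k ℓ ε i)
      ((((1 : Matrix (Fin n) (Fin n) ℝ) - zeroD D (stopMat P D ^ τ))⁻¹) i k *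
        (valueR Pr D R ℓ - valueR Pr D R k)) 0 := by
  set u : Fin n → ℝ := fun a => valueR Pr D R a with hu
  set RDc : Fin n → ℝ := fun a => if a ∈ D then 0 else R a with hRDc
  set B : Matrix (Fin n) (Fin n) ℝ :=
    Matrix.single k ℓ (1 : ℝ) - Matrix.single k k 1 with hB
  set C : Matrix (Fin n) (Fin n) ℝ := zeroD D B with hC
  set Mmat : Matrix (Fin n) (Fin n) ℝ :=
    (1 : Matrix (Fin n) (Fin n) ℝ) - zeroD D (stopMat P D ^ τ) with hMmat
  set b0 : Fin n → ℝ :=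
    (fun a => ∑ t ∈ Finset.range τ, ((stopMat P D ^ t).mulVec (RD D R)) a)
      + (stopMat P D ^ τ).mulVec RDc - (zeroD D (stopMat P D ^ τ)).mulVec RDc with hb0
  set d : Fin n → ℝ := (B - C).mulVec RDc with hd
  set γ : ℝ := valueR Pr D R ℓ - valueR Pr D R k with hγ
  have hdet0 : Mmat.det ≠ 0 := det_ne_main hP hirr hDne i hτ
  have hbell : Mmat.mulVec u = b0 := bellman_system hPr hP hirr hDne hR τ
  -- zeroD is additive over the perturbation
  have hzer : ∀ ε : ℝ, zeroD D (stopMat P D ^ τ + ε • B)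
      = zeroD D (stopMat P D ^ τ) + ε • C := by
    intro ε
    funext a b
    simp only [zeroD, Matrix.add_apply, Matrix.smul_apply, hC, smul_eq_mul]
    by_cases h : a ∈ D ∧ b ∈ D
    · simp [h]
    · simp [h]
  have hMe : ∀ ε : ℝ, (1 : Matrix (Fin n) (Fin n) ℝ) - zeroD D (stopMat P D ^ τ + ε • B)
      = Mmat - ε • C := by
    intro ε
    rw [hzer ε, hMmat]
    abel
  -- the vector identity γ • e_k = C u + d
  have hvec : γ • (Pi.single k (1 : ℝ) : Fin n → ℝ) = C.mulVec u + d := by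
    funext a
    simp only [Pi.smul_apply, Pi.single_apply, Pi.add_apply, smul_eq_mul]
    by_cases ha : a = k
    · subst ha
      have hCrow : ∀ j, C a j = (if j ∈ D ∧ j = ℓ then (1:ℝ) else 0)
          - (if j ∈ D ∧ j = a then (1:ℝ) else 0) := by
        intro j
        simp only [hC, zeroD, hB, Matrix.sub_apply, Matrix.single]
        by_cases hj : j ∈ D
        · simp [hk, hj, Matrix.of_apply, eq_comm]
        · simp [hj]
      have hBrow : ∀ j, B a j - C a j = (if j ∉ D ∧ j = ℓ then (1:ℝ) else 0)
          - (if j ∉ D ∧ j = a then (1:ℝ) else 0) := by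
        intro j
        rw [hCrow j]
        simp only [hB, Matrix.sub_apply, Matrix.single, Matrix.of_apply]
        by_cases hjl : j = ℓ
        · subst hjl
          have hja : ¬ j = a := fun h => hℓ h
          have haj : ¬ a = j := fun h => hℓ h.symm
          by_cases hj : j ∈ D <;> simp [hj, hja, haj, hk, hℓ] <;> ring
        · have hlj : ¬ ℓ = j := fun h => hjl h.symm
          by_cases hja : j = a
          · subst hja
            simp [hk, hjl, hlj, hℓ] <;> ring
          · have haj3 : ¬ a = j := fun h => hja h.symm
            by_cases hj : j ∈ D <;> simp [hj, hja, hjl, hlj, hk, hℓ, haj3] <;> ring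
      have hsum : ∀ (q : Fin n) (x : Fin n → ℝ) (p : Fin n → Prop) [DecidablePred p],
          ∑ j, (if p j ∧ j = q then (1:ℝ) else 0) * x j = if p q then x q else 0 := by
        intro q x p _
        rw [Finset.sum_congr rfl (fun j _ => show (if p j ∧ j = q then (1:ℝ) else 0) * x j
          = if j = q then (if p j then x j else 0) else 0 by
            by_cases h1 : p j <;> by_cases h2 : j = q <;> simp [h1, h2])]
        rw [Finset.sum_ite_eq']
        simp
      have hCu : C.mulVec u a = (if ℓ ∈ D then u ℓ else 0) - u a := by
        rw [Matrix.mulVec, dotProduct]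
        rw [Finset.sum_congr rfl (fun j _ => by rw [hCrow j, sub_mul])]
        rw [Finset.sum_sub_distrib, hsum ℓ u (· ∈ D), hsum a u (· ∈ D)]
        simp [hk]
      have hda : d a = (if ℓ ∉ D then R ℓ else 0) := by
        rw [hd, Matrix.mulVec, dotProduct]
        rw [Finset.sum_congr rfl (fun j _ => by rw [Matrix.sub_apply, hBrow j, sub_mul])]
        rw [Finset.sum_sub_distrib, hsum ℓ RDc (· ∉ D), hsum a RDc (· ∉ D)]
        have h1 : ¬ (a ∉ D) := by simp [hk]
        by_cases h2 : ℓ ∈ D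
        · simp [h1, h2, hRDc]
        · simp [h1, h2, hRDc]
      rw [hCu, hda, if_pos rfl, mul_one, hγ]
      by_cases h2 : ℓ ∈ D
      · rw [if_pos h2, if_neg (not_not_intro h2)]
        show valueR Pr D R ℓ - valueR Pr D R a
          = valueR Pr D R ℓ - valueR Pr D R a + 0
        ring
      · rw [if_neg h2, if_pos h2]
        have hre : valueR Pr D R ℓ = R ℓ := valueR_notD hPr hP hR h2
        rw [← hre]
        show valueR Pr D R ℓ - valueR Pr D R a
          = 0 - valueR Pr D R a + valueR Pr D R ℓ
        ring
    · -- a ≠ k: all rows vanish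
      have hBa : ∀ j, B a j = 0 := by
        intro j
        simp only [hB, Matrix.sub_apply, Matrix.single, Matrix.of_apply]
        have : ¬ k = a := fun h => ha h.symm
        simp [this]
      have hCa : ∀ j, C a j = 0 := by
        intro j
        simp only [hC, zeroD]
        split
        · exact hBa j
        · rfl
      have h1 : C.mulVec u a = 0 := by
        rw [Matrix.mulVec, dotProduct]
        exact Finset.sum_eq_zero fun j _ => by rw [hCa j, zero_mul]
      have h2 : d a = 0 := by
        rw [hd, Matrix.mulVec, dotProduct]
        exact Finset.sum_eq_zero fun j _ => by
          rw [Matrix.sub_apply, hBa j, hCa j, sub_zero, zero_mul]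
      rw [h1, h2]
      simp [ha]
  -- explicit formula for perturbedSol where the matrix is invertible
  have hform : ∀ ε : ℝ, (Mmat - ε • C).det ≠ 0 →
      perturbedSol P D R τ k ℓ ε
        = u + (ε * γ) • (Mmat - ε • C)⁻¹.mulVec (Pi.single k (1 : ℝ)) := by
    intro ε hdet
    have hunit : IsUnit (Mmat - ε • C).det := isUnit_iff_ne_zero.mpr hdet
    have hbe : (fun a => ∑ t ∈ Finset.range τ, ((stopMat P D ^ t).mulVec (RD D R)) a)
        + (stopMat P D ^ τ + ε • B).mulVec RDc
        - (zeroD D (stopMat P D ^ τ + ε • B)).mulVec RDc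
        = b0 + ε • d := by
      rw [hzer ε, Matrix.add_mulVec, Matrix.add_mulVec, Matrix.smul_mulVec,
        Matrix.smul_mulVec, hb0, hd]
      funext a
      simp only [hB, Matrix.sub_mulVec, Pi.add_apply, Pi.sub_apply, Pi.smul_apply,
        smul_eq_mul]
      ring
    have hcand : (Mmat - ε • C).mulVec
        (u + (ε * γ) • (Mmat - ε • C)⁻¹.mulVec (Pi.single k (1 : ℝ))) = b0 + ε • d := by
      rw [Matrix.mulVec_add, Matrix.mulVec_smul, Matrix.mulVec_mulVec,
        Matrix.mul_nonsing_inv _ hunit, Matrix.one_mulVec, Matrix.sub_mulVec,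
        Matrix.smul_mulVec, hbell]
      funext a
      have hv := congrFun hvec a
      simp only [Pi.add_apply, Pi.sub_apply, Pi.smul_apply, smul_eq_mul] at hv ⊢
      linear_combination ε * hv
    show ((1 : Matrix (Fin n) (Fin n) ℝ) - zeroD D (stopMat P D ^ τ + ε • B))⁻¹.mulVec
        ((fun a => ∑ t ∈ Finset.range τ, ((stopMat P D ^ t).mulVec (RD D R)) a)
          + (stopMat P D ^ τ + ε • B).mulVec RDc
          - (zeroD D (stopMat P D ^ τ + ε • B)).mulVec RDc) = _
    rw [hMe ε, hbe, ← hcand, Matrix.mulVec_mulVec, Matrix.nonsing_inv_mul _ hunit,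
      Matrix.one_mulVec]
  -- part 1
  have hzero : perturbedSol P D R τ k ℓ 0 = u := by
    have h0 : (Mmat - (0:ℝ) • C).det ≠ 0 := by
      rw [zero_smul, sub_zero]
      exact hdet0
    rw [hform 0 h0]
    funext a
    simp
  refine ⟨hzero, ?_⟩
  -- part 2: the derivative
  have hMc : Continuous fun ε : ℝ => Mmat - ε • C := by
    apply Continuous.sub continuous_const
    exact continuous_id.smul continuous_const
  have hdetc : Continuous fun ε : ℝ => (Mmat - ε • C).det := hMc.matrix_det
  have hdetat : (Mmat - (0:ℝ) • C).det ≠ 0 := by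
    rw [zero_smul, sub_zero]; exact hdet0
  have hinvc : ContinuousAt (fun ε : ℝ => ((Mmat - ε • C)⁻¹) i k) 0 := by
    have hfun : ∀ ε : ℝ, ((Mmat - ε • C)⁻¹) i k
        = ((Mmat - ε • C).det)⁻¹ * (Mmat - ε • C).adjugate i k := by
      intro ε
      rw [Matrix.inv_def, Ring.inverse_eq_inv']
      simp [Matrix.smul_apply, smul_eq_mul]
    rw [show (fun ε : ℝ => ((Mmat - ε • C)⁻¹) i k)
        = fun ε : ℝ => ((Mmat - ε • C).det)⁻¹ * (Mmat - ε • C).adjugate i k from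
      funext hfun]
    exact ContinuousAt.mul (hdetc.continuousAt.inv₀ hdetat)
      ((hMc.matrix_adjugate.matrix_elem i k).continuousAt)
  have hev : ∀ᶠ ε : ℝ in nhds 0, (Mmat - ε • C).det ≠ 0 :=
    hdetc.continuousAt.eventually_ne hdetat
  set g : ℝ → ℝ := fun ε => u i + ε * (γ * ((Mmat - ε • C)⁻¹) i k) with hg
  have hgev : (fun ε : ℝ => perturbedSol P D R τ k ℓ ε i) =ᶠ[nhds 0] g := by
    apply hev.mono
    intro ε hε
    show perturbedSol P D R τ k ℓ ε i = g ε
    rw [hform ε hε, hg]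
    simp only [Pi.add_apply, Pi.smul_apply, smul_eq_mul, Matrix.mulVec_single_one, Matrix.col_apply, mul_one]
    ring
  have hgd : HasDerivAt g (Mmat⁻¹ i k * γ) 0 := by
    rw [hasDerivAt_iff_tendsto_slope]
    have hlim : Filter.Tendsto (fun ε : ℝ => γ * ((Mmat - ε • C)⁻¹) i k)
        (nhdsWithin 0 {(0:ℝ)}ᶜ) (nhds (Mmat⁻¹ i k * γ)) := by
      have h1 : ContinuousAt (fun ε : ℝ => γ * ((Mmat - ε • C)⁻¹) i k) 0 :=
        continuousAt_const.mul hinvc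
      have h2 := h1.tendsto
      have h3 : γ * ((Mmat - (0:ℝ) • C)⁻¹) i k = Mmat⁻¹ i k * γ := by
        rw [zero_smul, sub_zero]; ring
      rw [h3] at h2
      exact h2.mono_left nhdsWithin_le_nhds
    apply hlim.congr'
    apply eventually_nhdsWithin_of_forall
    intro ε hε
    have hεne : ε ≠ 0 := hε
    rw [slope_def_field, hg]
    simp only
    rw [show u i + (0:ℝ) * (γ * ((Mmat - (0:ℝ) • C)⁻¹) i k) = u i by ring]
    field_simp
    ring
  exact (hgd.congr_of_eventuallyEq hgev)


end RareTD
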